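/- Let Γ = (V,R) be a graph, let φ be a continuous automorphism of G_Γ, and let f be the automorphism of Γ determined by φ(ker(π_v)) = ker(π_{f(v)}) for all v ∈ V (such an f exists and is unique, since the subgroups ker(π_v) are exactly the open normal subgroups of G_Γ with quotient isomorphic to D_p, and adjacency corresponds to the existence of a common refinement with quotient W). Then there exist automorphisms σ_v ∈ Aut(D_p) for each v ∈ V and σ_r ∈ Aut(W) for each r ∈ R such that φ = σ̄ ∘ φ_f, where φ_f((a_v)_{v∈V}, (b_r)_{r∈R}) = ((a_{f⁻¹(v)})_{v∈V}, (b_{f⁻¹(r)})_{r∈R}) is the coordinate-change automorphism associated to f and σ̄((a_v)_{v∈V}, (b_r)_{r∈R}) = ((σ_v(a_v))_{v∈V}, (σ_r(b_r))_{r∈R}). -/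

import Mathlib

open Function

noncomputable section

/-- A discrete group is a topological group. -/
instance (priority := 50) discreteTopologicalGroup (G : Type*) [Group G] [TopologicalSpace G]
    [DiscreteTopology G] : IsTopologicalGroup G where
  continuous_mul := continuous_of_discreteTopology
  continuous_inv := continuous_of_discreteTopology

/-- The sign epimorphism `τ : D_p → C_2 = {±1}` killing the rotations. -/
def dihedralSign (p : ℕ) : DihedralGroup p →* ℤˣ where
  toFun x := match x with
    | DihedralGroup.r _ => 1
    | DihedralGroup.sr _ => -1
  map_one' := rfl
  map_mul' a b := by cases a <;> cases b <;> rfl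

/-- `{±1}` acts on a commutative group by exponentiation (i.e. `-1` acts by inversion). -/
def unitsIntAut (A : Type*) [CommGroup A] : ℤˣ →* MulAut A where
  toFun u :=
    { toFun := fun x => x ^ (u : ℤ)
      invFun := fun x => x ^ (u : ℤ)
      left_inv := fun x => by rcases Int.units_eq_one_or u with h | h <;> simp [h]
      right_inv := fun x => by rcases Int.units_eq_one_or u with h | h <;> simp [h]
      map_mul' := fun x y => mul_zpow x y _ }
  map_one' := by ext x; simp
  map_mul' u v := by
    ext x
    rcases Int.units_eq_one_or u with h | h <;>
      rcases Int.units_eq_one_or v with h' | h' <;>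
        simp [h, h']

/-- The action of `D_p × D_p` on `C_q` given by `(x,y) · g = g^(τ(x)τ(y))`. -/
def Wact (p q : ℕ) : DihedralGroup p × DihedralGroup p →* MulAut (Multiplicative (ZMod q)) :=
  (unitsIntAut (Multiplicative (ZMod q))).comp
    (((dihedralSign p).comp (MonoidHom.fst _ _)) * ((dihedralSign p).comp (MonoidHom.snd _ _)))

/-- The group `W = C_q ⋊ (D_p × D_p)`. -/
abbrev Wgrp (p q : ℕ) : Type :=
  SemidirectProduct (Multiplicative (ZMod q)) (DihedralGroup p × DihedralGroup p) (Wact p q)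

/-- The quotient map `λ : W → D_p × D_p`. -/
abbrev lamW (p q : ℕ) : Wgrp p q →* DihedralGroup p × DihedralGroup p :=
  SemidirectProduct.rightHom

/-- The group `G_Γ ≤ D_p^V × W^R` associated to a graph `Γ = (V, R)`. -/
def GGamma (p q : ℕ) (V : Type*) (R : Set (V × V)) :
    Subgroup ((V → DihedralGroup p) × (R → Wgrp p q)) where
  carrier := {x | ∀ r : R,
    SemidirectProduct.rightHom (x.2 r) = (x.1 (r : V × V).1, x.1 (r : V × V).2)}
  one_mem' := by intro r; simp; rfl
  mul_mem' := by
    intro a b ha hb r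
    simp only [Set.mem_setOf_eq] at ha hb
    simp only [Prod.snd_mul, Pi.mul_apply, map_mul, Prod.fst_mul, ha r, hb r, Prod.mk_mul_mk]
  inv_mem' := by
    intro a ha r
    simp only [Set.mem_setOf_eq] at ha
    simp only [Prod.snd_inv, Pi.inv_apply, map_inv, Prod.fst_inv, ha r, Prod.inv_mk]

instance (n : ℕ) : TopologicalSpace (DihedralGroup n) := ⊥
instance (n : ℕ) : DiscreteTopology (DihedralGroup n) := ⟨rfl⟩
instance (p q : ℕ) : TopologicalSpace (Wgrp p q) := ⊥
instance (p q : ℕ) : DiscreteTopology (Wgrp p q) := ⟨rfl⟩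

variable (p q : ℕ) (V : Type*) (R : Set (V × V))

/-- The coordinate projection `π_v : G_Γ → D_p` at a vertex `v`. -/
def vProj (v : V) : ↥(GGamma p q V R) →* DihedralGroup p :=
  (Pi.evalMonoidHom (fun _ : V => DihedralGroup p) v).comp
    ((MonoidHom.fst _ _).comp (GGamma p q V R).subtype)

/-- The coordinate projection `π_r : G_Γ → W` at an edge `r`. -/
def eProj (r : R) : ↥(GGamma p q V R) →* Wgrp p q :=
  (Pi.evalMonoidHom (fun _ : R => Wgrp p q) r).comp
    ((MonoidHom.snd _ _).comp (GGamma p q V R).subtype)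

variable (I : Type*)

/-- The coordinate projection `π_v : G_Γ × C_2^I → D_p` at a vertex `v`. -/
def vProjK (v : V) : (↥(GGamma p q V R) × (I → ℤˣ)) →* DihedralGroup p :=
  (vProj p q V R v).comp (MonoidHom.fst _ _)

/-- The coordinate projection `π_r : G_Γ × C_2^I → W` at an edge `r`. -/
def eProjK (r : R) : (↥(GGamma p q V R) × (I → ℤˣ)) →* Wgrp p q :=
  (eProj p q V R r).comp (MonoidHom.fst _ _)

/-- The map `ξ_Γ : G_Γ → C_2^V`, `((a_v), (b_r)) ↦ (τ(a_v))_v`. -/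
def xiGamma : ↥(GGamma p q V R) →* (V → ℤˣ) :=
  Pi.monoidHom fun v => (dihedralSign p).comp (vProj p q V R v)

end

noncomputable section Statement13Aux

open SemidirectProduct
open scoped Classical

variable {p q : ℕ} {V : Type} {R : Set (V × V)}

/-- The ambient product group. -/
abbrev Amb (p q : ℕ) (V : Type) (R : Set (V × V)) : Type :=
  (V → DihedralGroup p) × (R → Wgrp p q)

lemma mem_GGamma_iff {x : Amb p q V R} :
    x ∈ GGamma p q V R ↔ ∀ r : R,
      SemidirectProduct.rightHom (x.2 r) = (x.1 (r : V × V).1, x.1 (r : V × V).2) :=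
  Iff.rfl

lemma coord_rel (x : ↥(GGamma p q V R)) (r : R) :
    SemidirectProduct.rightHom ((x : Amb p q V R).2 r)
      = ((x : Amb p q V R).1 (r : V × V).1, (x : Amb p q V R).1 (r : V × V).2) :=
  x.2 r

/-- The canonical section `D_p^V → G_Γ`. -/
def secG (p q : ℕ) (V : Type) (R : Set (V × V)) :
    (V → DihedralGroup p) →* ↥(GGamma p q V R) where
  toFun g := ⟨(g, fun s => SemidirectProduct.inr (g (s : V × V).1, g (s : V × V).2)),
    mem_GGamma_iff.mpr fun s => by simp⟩
  map_one' := by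
    refine Subtype.ext (Prod.ext rfl (funext fun s => ?_))
    simp; rfl
  map_mul' g h := by
    refine Subtype.ext (Prod.ext rfl (funext fun s => ?_))
    show SemidirectProduct.inr ((g * h) (s : V × V).1, (g * h) (s : V × V).2) = _
    simp [← Prod.mk_mul_mk]

lemma secG_fst (g : V → DihedralGroup p) :
    ((secG p q V R g : Amb p q V R)).1 = g := rfl

lemma secG_snd (g : V → DihedralGroup p) (s : R) :
    ((secG p q V R g : Amb p q V R)).2 s
      = SemidirectProduct.inr (g (s : V × V).1, g (s : V × V).2) := rfl

/-- Single-edge element of `G_Γ` with a `C_q`-value at one edge. -/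
def eE (r₀ : R) (g : Multiplicative (ZMod q)) : ↥(GGamma p q (V := V) R) :=
  ⟨(1, fun t => if t = r₀ then SemidirectProduct.inl g else 1),
    mem_GGamma_iff.mpr fun s => by by_cases h : s = r₀ <;> simp [h] <;> rfl⟩

lemma eE_fst (r₀ : R) (g : Multiplicative (ZMod q)) :
    ((eE (p := p) (V := V) r₀ g : Amb p q V R)).1 = 1 := rfl

lemma eE_snd (r₀ : R) (g : Multiplicative (ZMod q)) (t : R) :
    ((eE (p := p) (V := V) r₀ g : Amb p q V R)).2 t
      = if t = r₀ then SemidirectProduct.inl g else 1 := rfl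

lemma eE_one (r₀ : R) : eE (p := p) (V := V) r₀ (1 : Multiplicative (ZMod q)) = 1 := by
  refine Subtype.ext (Prod.ext rfl (funext fun t => ?_))
  by_cases h : t = r₀ <;> simp [eE, h]

lemma eE_inv (r₀ : R) (g : Multiplicative (ZMod q)) :
    eE (p := p) (V := V) r₀ g⁻¹ = (eE r₀ g)⁻¹ := by
  refine Subtype.ext (Prod.ext ?_ (funext fun t => ?_))
  · simp [eE]
  · by_cases h : t = r₀ <;> simp [eE, h]

lemma Wact_apply (a b : DihedralGroup p) (n : Multiplicative (ZMod q)) :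
    Wact p q (a, b) n = n ^ (((dihedralSign p a * dihedralSign p b : ℤˣ) : ℤ)) := rfl

lemma secG_conj_eE (tv : V → DihedralGroup p) (s₀ : R) (g : Multiplicative (ZMod q))
    (hsgn : dihedralSign p (tv (s₀ : V × V).1) * dihedralSign p (tv (s₀ : V × V).2) = -1) :
    secG p q V R tv * eE s₀ g * (secG p q V R tv)⁻¹ = eE s₀ g⁻¹ := by
  refine Subtype.ext (Prod.ext ?_ (funext fun t => ?_))
  · simp only [Subgroup.coe_mul, Subgroup.coe_inv, Prod.fst_mul, Prod.fst_inv, secG_fst, eE_fst]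
    group
  · simp only [Subgroup.coe_mul, Subgroup.coe_inv, Prod.snd_mul, Prod.snd_inv,
      Pi.mul_apply, Pi.inv_apply, secG_snd, eE_snd]
    by_cases h : t = s₀
    · subst h
      rw [if_pos rfl, if_pos rfl]
      rw [← map_inv, ← SemidirectProduct.inl_aut, Wact_apply, hsgn]
      norm_num
    · rw [if_neg h, if_neg h]
      group

lemma vProj_apply (v : V) (x : ↥(GGamma p q V R)) :
    vProj p q V R v x = (x : Amb p q V R).1 v := rfl

lemma eProj_apply (r : R) (x : ↥(GGamma p q V R)) :
    eProj p q V R r x = (x : Amb p q V R).2 r := rfl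

lemma vProj_surj (v : V) : Surjective (vProj p q V R v) := by
  classical
  intro d
  refine ⟨secG p q V R (fun w => if w = v then d else 1), ?_⟩
  rw [vProj_apply, secG_fst, if_pos rfl]

lemma eProj_surj (hloop : ∀ v : V, (v, v) ∉ R) (r : R) :
    Surjective (eProj p q V R r) := by
  classical
  intro w
  have hcd : (r : V × V).1 ≠ (r : V × V).2 := by
    intro h
    have hr : ((r : V × V).1, (r : V × V).2) ∈ R := by
      rw [Prod.mk.eta]; exact r.2
    rw [h] at hr
    exact hloop _ hr
  set g : V → DihedralGroup p := fun u =>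
    if u = (r : V × V).1 then (SemidirectProduct.rightHom w).1
    else if u = (r : V × V).2 then (SemidirectProduct.rightHom w).2 else 1 with hg
  have hgc : g (r : V × V).1 = (SemidirectProduct.rightHom w).1 := if_pos rfl
  have hgd : g (r : V × V).2 = (SemidirectProduct.rightHom w).2 := by
    simp only [hg]
    simp [Ne.symm hcd]
  refine ⟨⟨(g, fun s => if s = r then w
      else SemidirectProduct.inr (g (s : V × V).1, g (s : V × V).2)),
      mem_GGamma_iff.mpr fun s => ?_⟩, ?_⟩
  · by_cases h : s = r
    · subst h
      simp [hgc, hgd]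
    · simp [h]
  · rw [eProj_apply]
    show (if r = r then w else _) = w
    rw [if_pos rfl]

lemma keyFactor {G H : Type*} [Group G] [Group H] (g₁ g₂ : G →* H)
    (h₁ : Surjective g₁) (h₂ : Surjective g₂) (hk : g₁.ker = g₂.ker) :
    ∃ σ : H ≃* H, ∀ x, g₂ x = σ (g₁ x) := by
  refine ⟨((QuotientGroup.quotientKerEquivOfSurjective g₁ h₁).symm.trans
      (QuotientGroup.quotientMulEquivOfEq hk)).trans
      (QuotientGroup.quotientKerEquivOfSurjective g₂ h₂), fun x => ?_⟩
  have h1 : (QuotientGroup.quotientKerEquivOfSurjective g₁ h₁).symm (g₁ x)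
      = QuotientGroup.mk x := by
    rw [MulEquiv.symm_apply_eq]
    rfl
  simp only [MulEquiv.trans_apply, h1, QuotientGroup.quotientMulEquivOfEq_mk]
  rfl

lemma ker_cylinder (ψ : ↥(GGamma p q V R) →* Wgrp p q) (hc : Continuous ψ) :
    ∃ (Sv : Set V) (Se : Set R), Sv.Finite ∧ Se.Finite ∧
      ∀ x : ↥(GGamma p q V R), (∀ v ∈ Sv, (x : Amb p q V R).1 v = 1) →
        (∀ s ∈ Se, (x : Amb p q V R).2 s = 1) → ψ x = 1 := by
  have hopen : IsOpen (⇑ψ ⁻¹' {1}) := (isOpen_discrete _).preimage hc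
  have h1 : ⇑ψ ⁻¹' {1} ∈ nhds (1 : ↥(GGamma p q V R)) :=
    hopen.mem_nhds (by simp [map_one])
  rw [nhds_subtype, Filter.mem_comap] at h1
  obtain ⟨t, ht, hts⟩ := h1
  have h1amb : (↑(1 : ↥(GGamma p q V R)) : Amb p q V R) = (1, 1) := rfl
  rw [h1amb, nhds_prod_eq, Filter.mem_prod_iff] at ht
  obtain ⟨u, hu, w, hw, huw⟩ := ht
  rw [nhds_pi, Filter.mem_pi] at hu hw
  obtain ⟨Iv, hIvf, tv, htv, htvu⟩ := hu
  obtain ⟨Ie, hIef, te, hte, htew⟩ := hw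
  refine ⟨Iv, Ie, hIvf, hIef, fun x hxv hxe => ?_⟩
  have hxu : (x : Amb p q V R).1 ∈ u := by
    apply htvu
    intro i hi
    have := htv i
    rw [nhds_discrete, Filter.mem_pure] at this
    rw [hxv i hi]
    exact this
  have hxw : (x : Amb p q V R).2 ∈ w := by
    apply htew
    intro i hi
    have := hte i
    rw [nhds_discrete, Filter.mem_pure] at this
    rw [hxe i hi]
    exact this
  have : (x : Amb p q V R) ∈ t := huw ⟨hxu, hxw⟩
  exact hts this

lemma of_rightHom_eq_one {w : Wgrp p q} (h : SemidirectProduct.rightHom w = 1) :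
    w = SemidirectProduct.inl w.left := by
  have hr : w.right = 1 := by
    rw [← SemidirectProduct.rightHom_eq_right]; exact h
  conv_lhs => rw [← SemidirectProduct.inl_left_mul_inr_right w]
  rw [hr, map_one, mul_one]

lemma dih_pow {n : ℕ} [NeZero n] (d : DihedralGroup n) : d ^ (2 * n) = 1 := by
  rw [← orderOf_dvd_iff_pow_eq_one]
  cases d with
  | r i =>
    rw [DihedralGroup.orderOf_r]
    exact dvd_trans (Nat.div_dvd_of_dvd (Nat.gcd_dvd_left n i.val)) (dvd_mul_left n 2)
  | sr i =>
    rw [DihedralGroup.orderOf_sr]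
    exact dvd_mul_right 2 n

lemma mult_zmod_pow_eq_one (hq : q.Prime) {k : ℕ} (hk : ¬ q ∣ k)
    {n : Multiplicative (ZMod q)} (h : n ^ k = 1) : n = 1 := by
  haveI : Fact q.Prime := ⟨hq⟩
  have h2 : (k : ZMod q) * n.toAdd = 0 := by
    have h3 := congrArg Multiplicative.toAdd h
    rw [toAdd_pow, toAdd_one] at h3
    rwa [nsmul_eq_mul] at h3
  have hk0 : (k : ZMod q) ≠ 0 := by
    rw [Ne, ZMod.natCast_eq_zero_iff]; exact hk
  have h4 : n.toAdd = 0 := by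
    rcases mul_eq_zero.mp h2 with h' | h'
    · exact absurd h' hk0
    · exact h'
  rwa [toAdd_eq_zero] at h4

/-- Finitely supported "edge only" element of `G_Γ`. -/
def bigE (cf : R → Multiplicative (ZMod q)) (F : Finset R) : ↥(GGamma p q (V := V) R) :=
  ⟨(1, fun t => if t ∈ F then SemidirectProduct.inl (cf t) else 1),
    mem_GGamma_iff.mpr fun s => by by_cases h : s ∈ F <;> simp [h] <;> rfl⟩

lemma bigE_fst (cf : R → Multiplicative (ZMod q)) (F : Finset R) :
    ((bigE (p := p) cf F : Amb p q V R)).1 = 1 := rfl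

lemma bigE_snd (cf : R → Multiplicative (ZMod q)) (F : Finset R) (t : R) :
    ((bigE (p := p) cf F : Amb p q V R)).2 t
      = if t ∈ F then SemidirectProduct.inl (cf t) else 1 := rfl

lemma bigE_empty (cf : R → Multiplicative (ZMod q)) : bigE (p := p) (V := V) cf ∅ = 1 := by
  refine Subtype.ext (Prod.ext rfl (funext fun t => ?_))
  simp [bigE]

lemma bigE_insert (cf : R → Multiplicative (ZMod q)) {s : R} {F : Finset R} (hs : s ∉ F) :
    bigE (p := p) (V := V) cf (insert s F) = eE s (cf s) * bigE cf F := by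
  refine Subtype.ext (Prod.ext ?_ (funext fun t => ?_))
  · simp [bigE, eE]
  · simp only [Subgroup.coe_mul, Prod.snd_mul, Pi.mul_apply, bigE_snd, eE_snd,
      Finset.mem_insert]
    by_cases h1 : t = s
    · subst h1
      rw [if_pos (Or.inl rfl), if_pos rfl, if_neg hs, mul_one]
    · rw [if_neg h1, one_mul]
      by_cases h2 : t ∈ F
      · rw [if_pos (Or.inr h2), if_pos h2]
      · rw [if_neg ?_, if_neg h2]
        rintro (h | h) <;> [exact h1 h; exact h2 h]

lemma psi_bigE (ψ : ↥(GGamma p q V R) →* Wgrp p q) (cf : R → Multiplicative (ZMod q))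
    (F : Finset R) (h : ∀ s ∈ F, ψ (eE s (cf s)) = 1) : ψ (bigE cf F) = 1 := by
  classical
  induction F using Finset.induction_on with
  | empty => rw [bigE_empty, map_one]
  | @insert _ _ hs ih =>
    rw [bigE_insert cf hs, map_mul, h _ (Finset.mem_insert_self _ _),
      ih (fun s hs' => h s (Finset.mem_insert_of_mem hs')), one_mul]

lemma core_ker (hp : p.Prime) (hq : q.Prime) (hpo : Odd p) (hqo : Odd q) (hpq : p ≠ q)
    (hloop : ∀ v : V, (v, v) ∉ R) (hor : ∀ a b : V, (a, b) ∈ R → (b, a) ∉ R)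
    (r' : R) (ψ : ↥(GGamma p q V R) →* Wgrp p q) (hc : Continuous ψ)
    (hM : ∀ z : ↥(GGamma p q V R), (z : Amb p q V R).1 (r' : V × V).1 = 1 →
      (z : Amb p q V R).1 (r' : V × V).2 = 1 → SemidirectProduct.rightHom (ψ z) = 1)
    (x : ↥(GGamma p q V R)) (hx : (x : Amb p q V R).2 r' = 1) : ψ x = 1 := by
  classical
  haveI : NeZero p := ⟨hp.ne_zero⟩
  have hq2 : ¬ q ∣ 2 := by
    intro h
    have h2 := (Nat.prime_dvd_prime_iff_eq hq Nat.prime_two).mp h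
    rw [h2] at hqo
    exact absurd hqo (by decide)
  have hq2p : ¬ q ∣ 2 * p := by
    intro h
    rcases (Nat.Prime.dvd_mul hq).mp h with h' | h'
    · exact hq2 h'
    · exact hpq ((Nat.prime_dvd_prime_iff_eq hq hp).mp h').symm
  have hab1 : (x : Amb p q V R).1 (r' : V × V).1 = 1 ∧ (x : Amb p q V R).1 (r' : V × V).2 = 1 := by
    have h := coord_rel x r'
    rw [hx, map_one] at h
    exact ⟨(Prod.ext_iff.mp h.symm).1, (Prod.ext_iff.mp h.symm).2⟩
  obtain ⟨ha1, hb1⟩ := hab1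
  -- ψ kills single-edge elements supported away from r'
  have hE : ∀ s : R, s ≠ r' → ∀ g : Multiplicative (ZMod q), ψ (eE s g) = 1 := by
    intro s hs g
    have heM : ∀ g' : Multiplicative (ZMod q),
        SemidirectProduct.rightHom (ψ (eE s g')) = 1 := fun g' => hM _ rfl rfl
    have hcd : (s : V × V).1 ≠ (s : V × V).2 := by
      intro h
      have hmem : ((s : V × V).1, (s : V × V).2) ∈ R := by rw [Prod.mk.eta]; exact s.2
      rw [h] at hmem
      exact hloop _ hmem
    have habR : ((r' : V × V).1, (r' : V × V).2) ∈ R := by rw [Prod.mk.eta]; exact r'.2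
    have hsR : ((s : V × V).1, (s : V × V).2) ∈ R := by rw [Prod.mk.eta]; exact s.2
    have hwex : ∃ w : V, (w = (s : V × V).1 ∨ w = (s : V × V).2) ∧
        w ≠ (r' : V × V).1 ∧ w ≠ (r' : V × V).2 := by
      by_cases hca : (s : V × V).1 = (r' : V × V).1
      · refine ⟨(s : V × V).2, Or.inr rfl, ?_, ?_⟩
        · rw [← hca]; exact fun h => hcd h.symm
        · intro h
          apply hs
          apply Subtype.ext
          rw [← Prod.mk.eta (p := (s : V × V)), ← Prod.mk.eta (p := (r' : V × V)), hca, h]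
      · by_cases hcb : (s : V × V).1 = (r' : V × V).2
        · refine ⟨(s : V × V).2, Or.inr rfl, ?_, ?_⟩
          · intro h
            apply hor _ _ habR
            rw [← h, ← hcb]
            exact hsR
          · rw [← hcb]; exact fun h => hcd h.symm
        · exact ⟨(s : V × V).1, Or.inl rfl, hca, hcb⟩
    obtain ⟨w, hwc, hwa, hwb⟩ := hwex
    set tv : V → DihedralGroup p := fun u => if u = w then DihedralGroup.sr 0 else 1 with htv
    have hsgn : dihedralSign p (tv (s : V × V).1) * dihedralSign p (tv (s : V × V).2) = -1 := by
      rcases hwc with h | h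
      · have h1 : tv (s : V × V).1 = DihedralGroup.sr 0 := by
          simp only [htv]; rw [if_pos h.symm]
        have h2 : tv (s : V × V).2 = 1 := by
          simp only [htv]
          rw [if_neg]
          intro h'
          exact hcd ((h'.trans h)).symm
        rw [h1, h2, map_one, mul_one]
        rfl
      · have h1 : tv (s : V × V).2 = DihedralGroup.sr 0 := by
          simp only [htv]; rw [if_pos h.symm]
        have h2 : tv (s : V × V).1 = 1 := by
          simp only [htv]
          rw [if_neg]
          intro h'
          exact hcd (h'.trans h)
        rw [h1, h2, map_one, one_mul]
        rfl
    have ht := secG_conj_eE tv s g hsgn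
    have hMt : SemidirectProduct.rightHom (ψ (secG p q V R tv)) = 1 := by
      refine hM _ ?_ ?_
      · rw [secG_fst]
        simp only [htv]
        rw [if_neg (Ne.symm hwa)]
      · rw [secG_fst]
        simp only [htv]
        rw [if_neg (Ne.symm hwb)]
    have h1 : ψ (secG p q V R tv) * ψ (eE s g) * (ψ (secG p q V R tv))⁻¹ = ψ (eE s g⁻¹) := by
      rw [← map_inv, ← map_mul, ← map_mul, ht]
    have hme : ψ (eE s g) = SemidirectProduct.inl ((ψ (eE s g)).left) :=
      of_rightHom_eq_one (heM g)
    have h2 : ψ (eE s g⁻¹) = (ψ (eE s g))⁻¹ := by rw [eE_inv, map_inv]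
    have hmt : ψ (secG p q V R tv) = SemidirectProduct.inl ((ψ (secG p q V R tv)).left) :=
      of_rightHom_eq_one hMt
    set m := (ψ (eE s g)).left
    set k := (ψ (secG p q V R tv)).left
    rw [h2, hme, hmt, ← map_inv, ← map_inv, ← map_mul, ← map_mul] at h1
    have h3 : k * m * k⁻¹ = m⁻¹ := SemidirectProduct.inl_injective h1
    have h4 : m * m = 1 := by
      have h5 : m = m⁻¹ := by
        rw [← h3, mul_comm k m, mul_inv_cancel_right]
      nth_rewrite 2 [h5]
      exact mul_inv_cancel m
    have hm1 : m = 1 := mult_zmod_pow_eq_one hq hq2 (k := 2) (by rw [pow_two]; exact h4)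
    rw [hme, hm1, map_one]
  -- decompose x
  obtain ⟨Sv, Se, hSvf, hSef, hkerS⟩ := ker_cylinder ψ hc
  set T : Set V := (Sv ∪ ⋃ s ∈ Se, {(s : V × V).1, (s : V × V).2}) ∪
      {(r' : V × V).1, (r' : V × V).2} with hT
  have haT : (r' : V × V).1 ∈ T := Or.inr (Or.inl rfl)
  have hbT : (r' : V × V).2 ∈ T := Or.inr (Or.inr rfl)
  have hSvT : ∀ v ∈ Sv, v ∈ T := fun v hv => Or.inl (Or.inl hv)
  have hSeT : ∀ s ∈ Se, (s : V × V).1 ∈ T ∧ (s : V × V).2 ∈ T := by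
    intro s hs
    constructor
    · exact Or.inl (Or.inr (Set.mem_biUnion hs (Or.inl rfl)))
    · exact Or.inl (Or.inr (Set.mem_biUnion hs (Or.inr rfl)))
  set xb : V → DihedralGroup p := fun v => if v ∈ T then (x : Amb p q V R).1 v else 1 with hxb
  have hxba : xb (r' : V × V).1 = 1 := by
    simp only [hxb]; rw [if_pos haT, ha1]
  have hxbb : xb (r' : V × V).2 = 1 := by
    simp only [hxb]; rw [if_pos hbT, hb1]
  set P := secG p q V R xb with hPdef
  set y := P⁻¹ * x with hy
  have hy1 : ∀ v, (y : Amb p q V R).1 v = (xb v)⁻¹ * (x : Amb p q V R).1 v := by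
    intro v
    rw [hy]
    simp only [Subgroup.coe_mul, Subgroup.coe_inv, Prod.fst_mul, Prod.fst_inv,
      Pi.mul_apply, Pi.inv_apply, hPdef, secG_fst]
  have hy2 : ∀ s : R, (y : Amb p q V R).2 s =
      (SemidirectProduct.inr (xb (s : V × V).1, xb (s : V × V).2))⁻¹ * (x : Amb p q V R).2 s := by
    intro s
    rw [hy]
    simp only [Subgroup.coe_mul, Subgroup.coe_inv, Prod.snd_mul, Prod.snd_inv,
      Pi.mul_apply, Pi.inv_apply, hPdef, secG_snd]
  have hyT : ∀ v ∈ T, (y : Amb p q V R).1 v = 1 := by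
    intro v hv
    rw [hy1]
    simp only [hxb]
    rw [if_pos hv, inv_mul_cancel]
  have hySe : ∀ s ∈ Se, SemidirectProduct.rightHom ((y : Amb p q V R).2 s) = 1 := by
    intro s hs
    rw [hy2, map_mul, map_inv, SemidirectProduct.rightHom_inr, coord_rel]
    have h1 : xb (s : V × V).1 = (x : Amb p q V R).1 (s : V × V).1 := by
      simp only [hxb]; rw [if_pos (hSeT s hs).1]
    have h2 : xb (s : V × V).2 = (x : Amb p q V R).1 (s : V × V).2 := by
      simp only [hxb]; rw [if_pos (hSeT s hs).2]
    rw [h1, h2, inv_mul_cancel]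
  have hyr' : (y : Amb p q V R).2 r' = 1 := by
    rw [hy2, hx, mul_one, hxba, hxbb]
    simp
    rfl
  set cf : R → Multiplicative (ZMod q) := fun s => ((y : Amb p q V R).2 s).left with hcf
  set y₁ := bigE (p := p) cf hSef.toFinset with hy₁def
  have hy₂ : ψ (y₁⁻¹ * y) = 1 := by
    apply hkerS
    · intro v hv
      simp only [Subgroup.coe_mul, Subgroup.coe_inv, Prod.fst_mul, Prod.fst_inv,
        Pi.mul_apply, Pi.inv_apply, hy₁def, bigE_fst]
      rw [hyT v (hSvT v hv)]
      simp
    · intro s hs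
      simp only [Subgroup.coe_mul, Subgroup.coe_inv, Prod.snd_mul, Prod.snd_inv,
        Pi.mul_apply, Pi.inv_apply, hy₁def, bigE_snd]
      rw [if_pos (hSef.mem_toFinset.mpr hs)]
      have h1 : (y : Amb p q V R).2 s = SemidirectProduct.inl (cf s) :=
        of_rightHom_eq_one (hySe s hs)
      rw [← h1, inv_mul_cancel]
  have hy₁ : ψ y₁ = 1 := by
    apply psi_bigE
    intro s hs
    by_cases h : s = r'
    · subst h
      have : cf s = 1 := by
        simp only [hcf]
        rw [hyr']
        rfl
      rw [this, eE_one, map_one]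
    · exact hE s h (cf s)
  have hP1 : ψ P = 1 := by
    have hMP : SemidirectProduct.rightHom (ψ P) = 1 := by
      refine hM P ?_ ?_
      · rw [hPdef, secG_fst]; exact hxba
      · rw [hPdef, secG_fst]; exact hxbb
    have hxbpow : xb ^ (2 * p) = 1 := by
      funext v
      rw [Pi.pow_apply, Pi.one_apply, dih_pow]
    have hpow : (ψ P) ^ (2 * p) = 1 := by
      rw [← map_pow, hPdef, ← map_pow, hxbpow, map_one, map_one]
    have hinl : ψ P = SemidirectProduct.inl ((ψ P).left) := of_rightHom_eq_one hMP
    rw [hinl, ← map_pow] at hpow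
    rw [show (1 : Wgrp p q) = SemidirectProduct.inl 1 from (map_one _).symm] at hpow
    have hl := SemidirectProduct.inl_injective hpow
    rw [hinl, mult_zmod_pow_eq_one hq hq2p hl, map_one]
  have hxdecomp : x = P * (y₁ * (y₁⁻¹ * y)) := by
    rw [mul_inv_cancel_left, hy, mul_inv_cancel_left]
  rw [hxdecomp, map_mul, map_mul, hP1, hy₁, hy₂, one_mul, one_mul]

end Statement13Aux

/-- Let `Γ = (V, R)` be a graph, `φ` a continuous automorphism of `G_Γ`,
and `f` the automorphism of `Γ` determined by `φ(ker π_v) = ker π_{f(v)}`.  Then there are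
automorphisms `σ_v ∈ Aut(D_p)` (for `v ∈ V`) and `σ_r ∈ Aut(W)` (for `r ∈ R`) such that
`φ = σ̄ ∘ φ_f`, where `φ_f` is the coordinate-change automorphism associated to `f` and
`σ̄` applies the `σ_v`, `σ_r` coordinatewise; equivalently, for every `x ∈ G_Γ`:
`(φ x)_v = σ_v (x_{f⁻¹ v})` for each vertex `v`, and `(φ x)_r = σ_r (x_{f⁻¹ r})` for each
edge `r` (where `f⁻¹ r` is the edge `r'` with `f(r') = r`). -/
theorem statement_13 (p q : ℕ) (hp : p.Prime) (hq : q.Prime) (hpo : Odd p) (hqo : Odd q)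
    (hpq : p ≠ q) (V : Type) (R : Set (V × V))
    (hloop : ∀ v : V, (v, v) ∉ R) (hor : ∀ a b : V, (a, b) ∈ R → (b, a) ∉ R)
    (φ : ↥(GGamma p q V R) ≃* ↥(GGamma p q V R)) (hφc : Continuous ⇑φ)
    (f : Equiv.Perm V)
    (hfR : ∀ a b : V, (a, b) ∈ R ↔ (f a, f b) ∈ R)
    (hker : ∀ v : V, ((vProj p q V R v).ker).map φ.toMonoidHom = (vProj p q V R (f v)).ker) :
    ∃ (σv : V → (DihedralGroup p ≃* DihedralGroup p)) (σr : R → (Wgrp p q ≃* Wgrp p q)),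
      ∀ x : ↥(GGamma p q V R),
        (∀ v : V, (φ x : (V → DihedralGroup p) × (R → Wgrp p q)).1 v =
          σv v ((x : (V → DihedralGroup p) × (R → Wgrp p q)).1 (f.symm v))) ∧
        (∀ r r' : R, (f (r' : V × V).1, f (r' : V × V).2) = (r : V × V) →
          (φ x : (V → DihedralGroup p) × (R → Wgrp p q)).2 r =
            σr r ((x : (V → DihedralGroup p) × (R → Wgrp p q)).2 r')) := by
  classical
  haveI : NeZero p := ⟨hp.ne_zero⟩
  haveI : NeZero q := ⟨hq.ne_zero⟩
  haveI : Finite (Wgrp p q) := by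
    apply Finite.of_injective (fun w : Wgrp p q => (w.left, w.right))
    intro u v h
    exact SemidirectProduct.ext (congrArg Prod.fst h) (congrArg Prod.snd h)
  have hGclosed : IsClosed ((GGamma p q V R : Set (Amb p q V R))) := by
    have heq : (GGamma p q V R : Set (Amb p q V R)) =
        ⋂ r : R, {z : Amb p q V R |
          SemidirectProduct.rightHom (z.2 r) = (z.1 (r : V × V).1, z.1 (r : V × V).2)} := by
      ext z
      simp only [Set.mem_iInter, Set.mem_setOf_eq, SetLike.mem_coe]
      exact mem_GGamma_iff
    rw [heq]
    refine isClosed_iInter fun r => isClosed_eq ?_ ?_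
    · exact continuous_of_discreteTopology.comp ((continuous_apply r).comp continuous_snd)
    · exact ((continuous_apply _).comp continuous_fst).prodMk
        ((continuous_apply _).comp continuous_fst)
  haveI : CompactSpace ↥(GGamma p q V R) := isCompact_iff_compactSpace.mp hGclosed.isCompact
  have hφsymmc : Continuous ⇑φ.symm :=
    (Continuous.homeoOfEquivCompactToT2 (f := φ.toEquiv) hφc).symm.continuous
  have hcontE : ∀ r : R, Continuous ⇑(eProj p q V R r) := fun r =>
    (continuous_apply r).comp (continuous_snd.comp continuous_subtype_val)
  -- kernels of vertex projections transported by φ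
  have hkermem : ∀ (u : V) (z : ↥(GGamma p q V R)), (z : Amb p q V R).1 u = 1 →
      ((φ z : ↥(GGamma p q V R)) : Amb p q V R).1 (f u) = 1 := by
    intro u z hz
    have hzmem : z ∈ (vProj p q V R u).ker := by rw [MonoidHom.mem_ker]; exact hz
    have h2 : φ z ∈ (vProj p q V R (f u)).ker := by
      rw [← hker u]
      exact ⟨z, hzmem, rfl⟩
    rwa [MonoidHom.mem_ker] at h2
  have hkermem' : ∀ (u : V) (z : ↥(GGamma p q V R)), (z : Amb p q V R).1 (f u) = 1 →
      ((φ.symm z : ↥(GGamma p q V R)) : Amb p q V R).1 u = 1 := by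
    intro u z hz
    have hzmem : z ∈ (vProj p q V R (f u)).ker := by rw [MonoidHom.mem_ker]; exact hz
    rw [← hker u] at hzmem
    obtain ⟨t, ht, hteq⟩ := hzmem
    have h3 : φ.symm z = t := by
      rw [← hteq]
      exact φ.symm_apply_apply t
    have h4 : φ.symm z ∈ (vProj p q V R u).ker := h3 ▸ ht
    rwa [MonoidHom.mem_ker] at h4
  -- vertex isomorphisms
  have hverker : ∀ v : V, (vProj p q V R (f.symm v)).ker =
      ((vProj p q V R v).comp φ.toMonoidHom).ker := by
    intro v
    rw [← MonoidHom.comap_ker]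
    have h := hker (f.symm v)
    rw [Equiv.apply_symm_apply] at h
    rw [← h, Subgroup.comap_map_eq_self_of_injective φ.injective]
  choose σv hσv using fun v : V =>
    keyFactor (vProj p q V R (f.symm v)) ((vProj p q V R v).comp φ.toMonoidHom)
      (vProj_surj _) (by rw [MonoidHom.coe_comp]; exact (vProj_surj v).comp φ.surjective)
      (hverker v)
  -- edge isomorphisms
  have hfsymmR : ∀ r : R, ((f.symm (r : V × V).1, f.symm (r : V × V).2)) ∈ R := by
    intro r
    have h := hfR (f.symm (r : V × V).1) (f.symm (r : V × V).2)
    rw [Equiv.apply_symm_apply, Equiv.apply_symm_apply] at h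
    apply h.mpr
    rw [Prod.mk.eta]
    exact r.2
  have hedgeker : ∀ r : R, (eProj p q V R ⟨_, hfsymmR r⟩).ker =
      ((eProj p q V R r).comp φ.toMonoidHom).ker := by
    intro r
    ext z
    simp only [MonoidHom.mem_ker, MonoidHom.comp_apply]
    constructor
    · intro hz
      have hcont : Continuous ⇑((eProj p q V R r).comp φ.toMonoidHom) :=
        (hcontE r).comp hφc
      have hM : ∀ z2 : ↥(GGamma p q V R),
          (z2 : Amb p q V R).1 ((⟨_, hfsymmR r⟩ : R) : V × V).1 = 1 →
          (z2 : Amb p q V R).1 ((⟨_, hfsymmR r⟩ : R) : V × V).2 = 1 →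
          SemidirectProduct.rightHom (((eProj p q V R r).comp φ.toMonoidHom) z2) = 1 := by
        intro z2 h1 h2
        rw [MonoidHom.comp_apply, eProj_apply, coord_rel]
        have e1 : ((φ z2 : ↥(GGamma p q V R)) : Amb p q V R).1 (r : V × V).1 = 1 := by
          have h3 := hkermem (f.symm (r : V × V).1) z2 h1
          rwa [Equiv.apply_symm_apply] at h3
        have e2 : ((φ z2 : ↥(GGamma p q V R)) : Amb p q V R).1 (r : V × V).2 = 1 := by
          have h3 := hkermem (f.symm (r : V × V).2) z2 h2
          rwa [Equiv.apply_symm_apply] at h3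
        exact Prod.mk_eq_one.mpr ⟨e1, e2⟩
      exact core_ker hp hq hpo hqo hpq hloop hor ⟨_, hfsymmR r⟩
        ((eProj p q V R r).comp φ.toMonoidHom) hcont hM z hz
    · intro hz
      have hcont : Continuous ⇑((eProj p q V R ⟨_, hfsymmR r⟩).comp φ.symm.toMonoidHom) :=
        (hcontE _).comp hφsymmc
      have hM : ∀ z2 : ↥(GGamma p q V R),
          (z2 : Amb p q V R).1 (r : V × V).1 = 1 →
          (z2 : Amb p q V R).1 (r : V × V).2 = 1 →
          SemidirectProduct.rightHom
            (((eProj p q V R ⟨_, hfsymmR r⟩).comp φ.symm.toMonoidHom) z2) = 1 := by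
        intro z2 h1 h2
        rw [MonoidHom.comp_apply, eProj_apply, coord_rel]
        have e1 : ((φ.symm z2 : ↥(GGamma p q V R)) : Amb p q V R).1 (f.symm (r : V × V).1)
            = 1 := by
          refine hkermem' (f.symm (r : V × V).1) z2 ?_
          rwa [Equiv.apply_symm_apply]
        have e2 : ((φ.symm z2 : ↥(GGamma p q V R)) : Amb p q V R).1 (f.symm (r : V × V).2)
            = 1 := by
          refine hkermem' (f.symm (r : V × V).2) z2 ?_
          rwa [Equiv.apply_symm_apply]
        exact Prod.mk_eq_one.mpr ⟨e1, e2⟩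
      have h := core_ker hp hq hpo hqo hpq hloop hor r
        ((eProj p q V R ⟨_, hfsymmR r⟩).comp φ.symm.toMonoidHom) hcont hM
        (φ.toMonoidHom z) hz
      rw [MonoidHom.comp_apply] at h
      have h5 : φ.symm.toMonoidHom (φ.toMonoidHom z) = z := φ.symm_apply_apply z
      rwa [h5] at h
  choose σr hσr using fun r : R =>
    keyFactor (eProj p q V R ⟨_, hfsymmR r⟩) ((eProj p q V R r).comp φ.toMonoidHom)
      (eProj_surj hloop _)
      (by rw [MonoidHom.coe_comp]; exact (eProj_surj hloop r).comp φ.surjective)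
      (hedgeker r)
  refine ⟨σv, σr, fun x => ⟨fun v => ?_, fun r r'' hfr => ?_⟩⟩
  · exact hσv v x
  · have hrr : r'' = ⟨_, hfsymmR r⟩ := by
      apply Subtype.ext
      have h1 : f (r'' : V × V).1 = (r : V × V).1 := congrArg Prod.fst hfr
      have h2 : f (r'' : V × V).2 = (r : V × V).2 := congrArg Prod.snd hfr
      show (r'' : V × V) = (f.symm (r : V × V).1, f.symm (r : V × V).2)
      rw [← h1, ← h2, Equiv.symm_apply_apply, Equiv.symm_apply_apply, Prod.mk.eta]
    rw [hrr]
    exact hσr r x
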